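/- Let A ∈ ℝ^{m×n} have rank n with thin QR factorization A + E = Q̂ R̂ of the perturbed matrix (Q̂ ∈ ℝ^{m×n} with orthonormal columns, R̂ ∈ ℝ^{n×n} upper triangular), ε = ‖E‖/‖A‖. Let x* solve AᵀA x* = Aᵀ b, and suppose x̂ ≠ 0 satisfies R̂ᵀ R̂ x̂ = (A+E)ᵀ b. Then ‖x̂ − x*‖/‖x̂‖ ≤ κ(A)² · ε · ( ‖A x̂ − b‖/(‖A‖·‖x̂‖) + 1 + ε ). -/

import Mathlib

open Matrix

/-- Spectral (operator 2-) norm of a real matrix. -/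
noncomputable def spNorm {m n : ℕ} (M : Matrix (Fin m) (Fin n) ℝ) : ℝ :=
  ‖LinearMap.toContinuousLinearMap (Matrix.toEuclideanLin M)‖

/-- Euclidean 2-norm of a real vector. -/
noncomputable def vNorm {n : ℕ} (x : Fin n → ℝ) : ℝ :=
  ‖(WithLp.equiv 2 (Fin n → ℝ)).symm x‖

/-- Moore–Penrose left inverse of a full column rank matrix. -/
noncomputable def pinv {m n : ℕ} (A : Matrix (Fin m) (Fin n) ℝ) : Matrix (Fin n) (Fin m) ℝ :=
  (Aᵀ * A)⁻¹ * Aᵀ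

/-- Condition number with respect to left inversion. -/
noncomputable def kappa {m n : ℕ} (A : Matrix (Fin m) (Fin n) ℝ) : ℝ :=
  spNorm A * spNorm (pinv A)

open scoped Matrix.Norms.L2Operator

lemma spNorm_eq_norm {m n : ℕ} (M : Matrix (Fin m) (Fin n) ℝ) : spNorm M = ‖M‖ := rfl

lemma vNorm_nonneg {n : ℕ} (x : Fin n → ℝ) : 0 ≤ vNorm x := norm_nonneg _

lemma spNorm_nonneg {m n : ℕ} (M : Matrix (Fin m) (Fin n) ℝ) : 0 ≤ spNorm M := norm_nonneg _

lemma vNorm_mulVec_le {m n : ℕ} (M : Matrix (Fin m) (Fin n) ℝ) (x : Fin n → ℝ) :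
    vNorm (M *ᵥ x) ≤ spNorm M * vNorm x :=
  M.l2_opNorm_mulVec ((WithLp.equiv 2 (Fin n → ℝ)).symm x)

lemma vNorm_add_le {n : ℕ} (x y : Fin n → ℝ) : vNorm (x + y) ≤ vNorm x + vNorm y := by
  simp only [vNorm, WithLp.equiv_symm_apply, WithLp.toLp_add]; exact norm_add_le _ _

lemma vNorm_neg {n : ℕ} (x : Fin n → ℝ) : vNorm (-x) = vNorm x := by
  simp only [vNorm, WithLp.equiv_symm_apply, WithLp.toLp_neg]; exact norm_neg _

lemma vNorm_sub_le {n : ℕ} (x y : Fin n → ℝ) : vNorm (x - y) ≤ vNorm x + vNorm y := by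
  rw [sub_eq_add_neg]
  exact (vNorm_add_le x (-y)).trans (by rw [vNorm_neg])

lemma vNorm_pos {n : ℕ} (x : Fin n → ℝ) (h : x ≠ 0) : 0 < vNorm x := by
  simp only [vNorm]
  rw [norm_pos_iff]
  simpa using h

lemma spNorm_transpose {m n : ℕ} (M : Matrix (Fin m) (Fin n) ℝ) : spNorm Mᵀ = spNorm M := by
  rw [spNorm_eq_norm, spNorm_eq_norm, ← Matrix.conjTranspose_eq_transpose_of_trivial]
  exact M.l2_opNorm_conjTranspose

lemma spNorm_mul_le {m n k : ℕ} (M : Matrix (Fin m) (Fin n) ℝ) (N : Matrix (Fin n) (Fin k) ℝ) :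
    spNorm (M * N) ≤ spNorm M * spNorm N :=
  M.l2_opNorm_mul N

lemma spNorm_pos {m n : ℕ} (M : Matrix (Fin m) (Fin n) ℝ) (h : M ≠ 0) : 0 < spNorm M := by
  rw [spNorm_eq_norm]
  exact norm_pos_iff.mpr h

theorem stmt_8 {m n : ℕ} (A E : Matrix (Fin m) (Fin n) ℝ)
    (Q : Matrix (Fin m) (Fin n) ℝ) (R : Matrix (Fin n) (Fin n) ℝ)
    (b : Fin m → ℝ) (xs xh : Fin n → ℝ)
    (hA : A.rank = n)
    (hQ : Qᵀ * Q = 1) (hRtri : R.BlockTriangular id) (hQR : A + E = Q * R)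
    (ε : ℝ) (hε : ε = spNorm E / spNorm A)
    (hxs : (Aᵀ * A) *ᵥ xs = Aᵀ *ᵥ b)
    (hxh : (Rᵀ * R) *ᵥ xh = (A + E)ᵀ *ᵥ b)
    (hne : xh ≠ 0) :
    vNorm (xh - xs) / vNorm xh ≤
      kappa A ^ 2 * ε * (vNorm (A *ᵥ xh - b) / (spNorm A * vNorm xh) + 1 + ε) := by
  -- n = 0 is impossible since xh ≠ 0
  rcases Nat.eq_zero_or_pos n with h0 | h0
  · exfalso; apply hne; subst h0; exact funext fun i => absurd i.2 (by omega)
  -- A ≠ 0 hence spNorm A > 0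
  have hAne : A ≠ 0 := by
    intro h; rw [h, Matrix.rank_zero] at hA; omega
  have ha : 0 < spNorm A := spNorm_pos A hAne
  have hh : 0 < vNorm xh := vNorm_pos xh hne
  set S : Matrix (Fin n) (Fin n) ℝ := Aᵀ * A with hSdef
  -- S is invertible
  have hS : IsUnit S := by
    have hr : S.rank = n := by rw [hSdef, Matrix.rank_transpose_mul_self, hA]
    rw [← Matrix.mulVec_surjective_iff_isUnit]
    intro y
    have htop : LinearMap.range S.mulVecLin = ⊤ := by
      apply Submodule.eq_top_of_finrank_eq
      rw [← Matrix.rank, hr]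
      simp [Module.finrank_pi]
    exact (LinearMap.range_eq_top.mp htop) y
  have hdet : IsUnit S.det := (Matrix.isUnit_iff_isUnit_det S).mp hS
  have hSinv : S⁻¹ * S = 1 := Matrix.nonsing_inv_mul S hdet
  have hSS : S * S⁻¹ = 1 := Matrix.mul_nonsing_inv S hdet
  have hPA : pinv A * A = 1 := by
    rw [pinv, Matrix.mul_assoc, ← hSdef]; exact hSinv
  have hStr : Sᵀ = S := by rw [hSdef, Matrix.transpose_mul, Matrix.transpose_transpose]
  have hSinvtr : (S⁻¹)ᵀ = S⁻¹ := by rw [Matrix.transpose_nonsing_inv, hStr]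
  have hSinv_eq : S⁻¹ = pinv A * (pinv A)ᵀ := by
    rw [pinv, ← hSdef, Matrix.transpose_mul, Matrix.transpose_transpose, hSinvtr]
    rw [Matrix.mul_assoc, ← Matrix.mul_assoc Aᵀ A S⁻¹, ← hSdef, hSS, Matrix.mul_one]
  -- R̂ᵀR̂ = (A+E)ᵀ(A+E)
  have hRR : Rᵀ * R = (A + E)ᵀ * (A + E) := by
    rw [hQR, Matrix.transpose_mul, Matrix.mul_assoc, ← Matrix.mul_assoc Qᵀ Q R, hQ,
      Matrix.one_mul]
  -- orthogonality of the perturbed residual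
  have hperp : (A + E)ᵀ *ᵥ ((A + E) *ᵥ xh - b) = 0 := by
    rw [Matrix.mulVec_sub, Matrix.mulVec_mulVec, ← hRR, hxh, sub_self]
  have hperp' : Aᵀ *ᵥ ((A + E) *ᵥ xh - b) + Eᵀ *ᵥ ((A + E) *ᵥ xh - b) = 0 := by
    rw [← Matrix.add_mulVec, ← Matrix.transpose_add]; exact hperp
  have h2 : Aᵀ *ᵥ ((A + E) *ᵥ xh - b) = S *ᵥ xh + (Aᵀ * E) *ᵥ xh - Aᵀ *ᵥ b := by
    rw [Matrix.mulVec_sub, Matrix.mulVec_mulVec, Matrix.mul_add, Matrix.add_mulVec, hSdef]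
  have e1 : Eᵀ *ᵥ ((A + E) *ᵥ xh - b) = -(S *ᵥ xh + (Aᵀ * E) *ᵥ xh - Aᵀ *ᵥ b) := by
    rw [← h2]; exact eq_neg_of_add_eq_zero_right hperp'
  -- key identity
  have hinj : Function.Injective S.mulVec := Matrix.mulVec_injective_iff_isUnit.mpr hS
  have hform : xh - xs =
      -((pinv A * E) *ᵥ xh) - (S⁻¹ * Eᵀ) *ᵥ ((A + E) *ᵥ xh - b) := by
    apply hinj
    have lhs : S *ᵥ (xh - xs) = S *ᵥ xh - Aᵀ *ᵥ b := by
      rw [Matrix.mulVec_sub, hSdef, hxs]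
    have r1 : S *ᵥ ((pinv A * E) *ᵥ xh) = (Aᵀ * E) *ᵥ xh := by
      rw [Matrix.mulVec_mulVec, pinv, ← hSdef]
      simp only [← Matrix.mul_assoc]
      rw [hSS, Matrix.one_mul]
    have r2 : S *ᵥ ((S⁻¹ * Eᵀ) *ᵥ ((A + E) *ᵥ xh - b)) = Eᵀ *ᵥ ((A + E) *ᵥ xh - b) := by
      rw [Matrix.mulVec_mulVec, ← Matrix.mul_assoc, hSS, Matrix.one_mul]
    rw [lhs, Matrix.mulVec_sub, Matrix.mulVec_neg, r1, r2, e1]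
    abel
  -- norm bounds
  set a := spNorm A
  set e := spNorm E
  set p := spNorm (pinv A)
  set h := vNorm xh
  set ρ := vNorm (A *ᵥ xh - b)
  have he : 0 ≤ e := spNorm_nonneg E
  have hp : 0 ≤ p := spNorm_nonneg (pinv A)
  have hρ : 0 ≤ ρ := vNorm_nonneg _
  -- ‖xh‖ ≤ p * a * ‖xh‖
  have hle : h ≤ p * (a * h) := by
    have hxh_eq : xh = pinv A *ᵥ (A *ᵥ xh) := by
      rw [Matrix.mulVec_mulVec, hPA, Matrix.one_mulVec]
    calc h = vNorm (pinv A *ᵥ (A *ᵥ xh)) := by rw [← hxh_eq]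
      _ ≤ p * vNorm (A *ᵥ xh) := vNorm_mulVec_le _ _
      _ ≤ p * (a * h) := by
          apply mul_le_mul_of_nonneg_left (vNorm_mulVec_le A xh) hp
  -- residual bound
  have hres : vNorm ((A + E) *ᵥ xh - b) ≤ ρ + e * h := by
    have : (A + E) *ᵥ xh - b = (A *ᵥ xh - b) + E *ᵥ xh := by
      rw [Matrix.add_mulVec]; abel
    rw [this]
    exact (vNorm_add_le _ _).trans (add_le_add_right (vNorm_mulVec_le E xh) ρ)
  have hSinv_norm : spNorm S⁻¹ ≤ p * p := by
    rw [hSinv_eq]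
    calc spNorm (pinv A * (pinv A)ᵀ) ≤ p * spNorm (pinv A)ᵀ := spNorm_mul_le _ _
      _ = p * p := by rw [spNorm_transpose]
  -- main bound
  have hmain : vNorm (xh - xs) ≤ p * e * h + p * p * e * (ρ + e * h) := by
    rw [hform]
    refine (vNorm_sub_le _ _).trans ?_
    have b1 : vNorm (-((pinv A * E) *ᵥ xh)) ≤ p * e * h := by
      rw [vNorm_neg]
      calc vNorm ((pinv A * E) *ᵥ xh) ≤ spNorm (pinv A * E) * h := vNorm_mulVec_le _ _
        _ ≤ p * e * h := by
            apply mul_le_mul_of_nonneg_right (spNorm_mul_le _ _) (vNorm_nonneg xh)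
    have b2 : vNorm ((S⁻¹ * Eᵀ) *ᵥ ((A + E) *ᵥ xh - b)) ≤ p * p * e * (ρ + e * h) := by
      calc vNorm ((S⁻¹ * Eᵀ) *ᵥ ((A + E) *ᵥ xh - b))
          ≤ spNorm (S⁻¹ * Eᵀ) * vNorm ((A + E) *ᵥ xh - b) := vNorm_mulVec_le _ _
        _ ≤ (p * p * e) * (ρ + e * h) := by
            apply mul_le_mul _ hres (vNorm_nonneg _) (by positivity)
            calc spNorm (S⁻¹ * Eᵀ) ≤ spNorm S⁻¹ * spNorm Eᵀ := spNorm_mul_le _ _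
              _ = spNorm S⁻¹ * e := by rw [spNorm_transpose]
              _ ≤ p * p * e := mul_le_mul_of_nonneg_right hSinv_norm he
    linarith
  -- final arithmetic
  rw [hε, div_le_iff₀ hh]
  have hrhs : kappa A ^ 2 * (e / a) * (ρ / (a * h) + 1 + e / a) * h
      = p ^ 2 * e * ρ + a * p ^ 2 * e * h + p ^ 2 * e ^ 2 * h := by
    rw [kappa]
    field_simp
    ring
  rw [hrhs]
  have hmul : p * e * h ≤ p * e * (p * (a * h)) :=
    mul_le_mul_of_nonneg_left hle (by positivity)
  nlinarith [hmain, hmul]
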